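/- A positive definite matrix A ∈ B(ℂ^d) satisfies tr(A^{-1}) = d if and only if there exists an invertible matrix S ∈ B(ℂ^d) whose columns are all unit vectors such that A = (S S*)^{-1}. -/

import Mathlib

open Complex Matrix

open scoped ComplexOrder

lemma zeta_ne_one {d : ℕ} (j l : Fin d) (h : j ≠ l) :
    Complex.exp ((2 * Real.pi * ((j:ℝ) - l) / d : ℝ) * Complex.I) ≠ 1 := by
  have hd : (0:ℝ) < d := Nat.cast_pos.mpr j.pos
  intro he
  rw [Complex.exp_eq_one_iff] at he
  obtain ⟨n, hn⟩ := he
  have h2 : ((2 * Real.pi * ((j:ℝ) - l) / d : ℝ) : ℂ) * Complex.I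
      = ((n * (2*Real.pi) : ℝ) : ℂ) * Complex.I := by
    push_cast at hn ⊢; linear_combination hn
  have h3 := mul_right_cancel₀ Complex.I_ne_zero h2
  have h4 : 2 * Real.pi * ((j:ℝ) - l) / d = n * (2*Real.pi) := by exact_mod_cast h3
  have hπ := Real.pi_pos
  have h5 : ((j:ℝ) - l) = n * d := by
    have h2π : (2*Real.pi) ≠ 0 := by positivity
    apply mul_left_cancel₀ h2π
    field_simp at h4
    linear_combination (2*Real.pi) * h4
  have h6 : ((j:ℤ) - l) = n * d := by exact_mod_cast h5
  have hj := j.is_lt; have hl := l.is_lt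
  have hne : (j:ℤ) ≠ (l:ℤ) := by
    simpa using fun hh => h (Fin.ext (by exact_mod_cast hh))
  rcases lt_trichotomy n 0 with hn0 | hn0 | hn0
  · nlinarith [hn0, h6]
  · simp [hn0] at h6; omega
  · nlinarith [hn0, h6]

lemma zeta_pow_d {d : ℕ} (j l : Fin d) :
    Complex.exp ((2 * Real.pi * ((j:ℝ) - l) / d : ℝ) * Complex.I) ^ d = 1 := by
  have hd : (0:ℝ) < d := Nat.cast_pos.mpr j.pos
  rw [← Complex.exp_nat_mul]
  have hd' : (d:ℂ) ≠ 0 := by exact_mod_cast hd.ne'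
  have : (d : ℂ) * (((2 * Real.pi * ((j:ℝ) - l) / d : ℝ) : ℂ) * Complex.I)
      = ((((j:ℤ) - (l:ℤ)) : ℤ) : ℂ) * (2 * Real.pi * Complex.I) := by
    push_cast
    field_simp
  rw [this, Complex.exp_int_mul_two_pi_mul_I]

lemma key_sum {d : ℕ} (j l : Fin d) :
    ∑ k : Fin d, Complex.exp ((2 * Real.pi * ((j:ℝ) - l) / d * k : ℝ) * Complex.I)
      = if j = l then (d : ℂ) else 0 := by
  have hpow : ∀ k : ℕ, Complex.exp ((2 * Real.pi * ((j:ℝ) - l) / d * k : ℝ) * Complex.I)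
      = Complex.exp ((2 * Real.pi * ((j:ℝ) - l) / d : ℝ) * Complex.I) ^ k := by
    intro k
    rw [← Complex.exp_nat_mul]
    push_cast
    ring_nf
  simp_rw [hpow]
  rw [Fin.sum_univ_eq_sum_range]
  split_ifs with hjl
  · subst hjl
    simp
  · rw [geom_sum_eq (zeta_ne_one j l hjl), zeta_pow_d j l, sub_self, zero_div]

noncomputable def dftM (d : ℕ) : Matrix (Fin d) (Fin d) ℂ :=
  Matrix.of fun j k => Complex.exp ((2 * Real.pi * j * k / d : ℝ) * Complex.I)
    * ((Real.sqrt d : ℝ) : ℂ)⁻¹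

lemma sqrt_inv_sq {d : ℕ} (hd : 0 < d) :
    ((Real.sqrt d : ℝ) : ℂ)⁻¹ * ((Real.sqrt d : ℝ) : ℂ)⁻¹ = ((d:ℂ))⁻¹ := by
  rw [← mul_inv, ← Complex.ofReal_mul, Real.mul_self_sqrt (by positivity)]
  push_cast
  ring

lemma star_exp_mul {d : ℕ} (x : ℝ) :
    (starRingEnd ℂ) (Complex.exp ((x:ℂ) * Complex.I) * ((Real.sqrt d : ℝ) : ℂ)⁻¹)
      = Complex.exp (((-x : ℝ):ℂ) * Complex.I) * ((Real.sqrt d : ℝ) : ℂ)⁻¹ := by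
  rw [_root_.map_mul, ← Complex.exp_conj, _root_.map_mul, Complex.conj_ofReal, Complex.conj_I,
    map_inv₀, Complex.conj_ofReal]
  congr 2
  push_cast; ring

lemma dftM_entry_conj_mul {d : ℕ} (k j : Fin d) :
    (starRingEnd ℂ) (dftM d k j) * dftM d k j = ((d:ℂ))⁻¹ := by
  have hd := j.pos
  simp only [dftM, Matrix.of_apply]
  rw [star_exp_mul]
  rw [show Complex.exp (((-(2 * Real.pi * k * j / d) : ℝ):ℂ) * Complex.I) * _ *
      (Complex.exp (((2 * Real.pi * k * j / d : ℝ):ℂ) * Complex.I) * _) =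
      (Complex.exp (((-(2 * Real.pi * k * j / d) : ℝ):ℂ) * Complex.I) *
       Complex.exp (((2 * Real.pi * k * j / d : ℝ):ℂ) * Complex.I)) *
      (((Real.sqrt d : ℝ):ℂ)⁻¹ * ((Real.sqrt d : ℝ):ℂ)⁻¹) from by ring]
  rw [← Complex.exp_add, sqrt_inv_sq hd]
  norm_num

lemma dftM_mul_conjT {d : ℕ} : dftM d * (dftM d).conjTranspose = 1 := by
  ext j l
  rw [Matrix.mul_apply]
  simp only [Matrix.conjTranspose_apply, Matrix.one_apply]
  have hd := j.pos
  have hd' : (d:ℂ) ≠ 0 := by exact_mod_cast hd.ne'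
  have key : ∀ k : Fin d, dftM d j k * star (dftM d l k)
      = Complex.exp ((2 * Real.pi * ((j:ℝ) - l) / d * k : ℝ) * Complex.I) * ((d:ℂ))⁻¹ := by
    intro k
    simp only [dftM, Matrix.of_apply, star_def]
    rw [star_exp_mul]
    rw [show Complex.exp (((2 * Real.pi * j * k / d : ℝ):ℂ) * Complex.I) * _ *
        (Complex.exp (((-(2 * Real.pi * l * k / d) : ℝ):ℂ) * Complex.I) * _) =
        (Complex.exp (((2 * Real.pi * j * k / d : ℝ):ℂ) * Complex.I) *
         Complex.exp (((-(2 * Real.pi * l * k / d) : ℝ):ℂ) * Complex.I)) *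
        (((Real.sqrt d : ℝ):ℂ)⁻¹ * ((Real.sqrt d : ℝ):ℂ)⁻¹) from by ring]
    rw [← Complex.exp_add, sqrt_inv_sq hd]
    congr 2
    have hdr : (d:ℝ) ≠ 0 := by exact_mod_cast hd.ne'
    push_cast
    field_simp
    ring
  rw [Finset.sum_congr rfl fun k _ => key k, ← Finset.sum_mul, key_sum j l]
  split_ifs with hjl
  · rw [mul_inv_cancel₀ hd']
  · rw [zero_mul]

/-- A positive definite matrix `A ∈ B(ℂ^d)` satisfies `tr (A⁻¹) = d` if and only
if there is an invertible matrix `S` all of whose columns are unit vectors with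
`A = (S S*)⁻¹`. -/
theorem stmt13 {d : ℕ} (A : Matrix (Fin d) (Fin d) ℂ) (hA : A.PosDef) :
    Matrix.trace A⁻¹ = (d : ℂ) ↔
      ∃ S : Matrix (Fin d) (Fin d) ℂ, IsUnit S ∧
        (∀ j : Fin d, ∑ i : Fin d, ‖S i j‖ ^ 2 = 1) ∧
        A = (S * S.conjTranspose)⁻¹ := by
  have hAdet : IsUnit A.det := hA.det_pos.ne'.isUnit
  constructor
  · intro htr
    set B := A⁻¹ with hBdef
    have hB : B.PosDef := hA.inv
    have hBH : B.IsHermitian := hB.1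
    set V : Matrix (Fin d) (Fin d) ℂ := (Matrix.IsHermitian.eigenvectorUnitary hBH : Matrix (Fin d) (Fin d) ℂ) with hVdef
    set eig : Fin d → ℝ := hBH.eigenvalues with heigdef
    have hspec : B = V * Matrix.diagonal (fun i => ((eig i : ℝ) : ℂ)) * V.conjTranspose := by
      have := hBH.spectral_theorem
      rw [Unitary.conjStarAlgAut_apply] at this
      exact this
    have hV1 : V * V.conjTranspose = 1 := by
      rw [← Matrix.star_eq_conjTranspose]
      exact (Matrix.mem_unitaryGroup_iff).mp (Matrix.IsHermitian.eigenvectorUnitary hBH).2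
    have hV2 : V.conjTranspose * V = 1 := by
      rw [← Matrix.star_eq_conjTranspose]
      exact (Matrix.mem_unitaryGroup_iff').mp (Matrix.IsHermitian.eigenvectorUnitary hBH).2
    set Dh : Matrix (Fin d) (Fin d) ℂ := Matrix.diagonal (fun i => ((Real.sqrt (eig i) : ℝ) : ℂ)) with hDhdef
    have hDhH : Dh.conjTranspose = Dh := by
      rw [hDhdef, Matrix.diagonal_conjTranspose]
      refine congrArg Matrix.diagonal ?_
      funext i
      simp [Complex.conj_ofReal]
    have hDh2 : Dh * Dh = Matrix.diagonal (fun i => ((eig i : ℝ) : ℂ)) := by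
      rw [hDhdef, Matrix.diagonal_mul_diagonal]
      refine congrArg Matrix.diagonal ?_
      funext i
      rw [← Complex.ofReal_mul, Real.mul_self_sqrt (hB.eigenvalues_pos i).le]
    set S : Matrix (Fin d) (Fin d) ℂ := V * Dh * dftM d with hSdef
    have hSS : S * S.conjTranspose = B := by
      rw [hSdef, Matrix.conjTranspose_mul, Matrix.conjTranspose_mul]
      calc V * Dh * dftM d * ((dftM d).conjTranspose * (Dh.conjTranspose * V.conjTranspose))
          = V * ((Dh * (dftM d * (dftM d).conjTranspose)) * (Dh.conjTranspose * V.conjTranspose)) := by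
            simp only [Matrix.mul_assoc]
        _ = V * ((Dh * Dh) * V.conjTranspose) := by
            rw [dftM_mul_conjT, Matrix.mul_one, hDhH, Matrix.mul_assoc]
        _ = B := by rw [hDh2, ← Matrix.mul_assoc, ← hspec]
    have hStS : S.conjTranspose * S
        = (dftM d).conjTranspose * (Matrix.diagonal (fun i => ((eig i : ℝ) : ℂ)) * dftM d) := by
      rw [hSdef, Matrix.conjTranspose_mul, Matrix.conjTranspose_mul]
      calc (dftM d).conjTranspose * (Dh.conjTranspose * V.conjTranspose) * (V * Dh * dftM d)
          = (dftM d).conjTranspose * (Dh.conjTranspose * ((V.conjTranspose * V) * (Dh * dftM d))) := by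
            simp only [Matrix.mul_assoc]
        _ = (dftM d).conjTranspose * ((Dh * Dh) * dftM d) := by
            rw [hV2, Matrix.one_mul, hDhH, Matrix.mul_assoc]
        _ = _ := by rw [hDh2]
    have htrB : ∑ i : Fin d, ((eig i : ℝ) : ℂ) = (d : ℂ) := by
      rw [← Matrix.trace_diagonal]
      calc Matrix.trace (Matrix.diagonal fun i => ((eig i : ℝ) : ℂ))
          = Matrix.trace (V * Matrix.diagonal (fun i => ((eig i : ℝ) : ℂ)) * V.conjTranspose) := by
            rw [Matrix.trace_mul_cycle, hV2, Matrix.one_mul]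
        _ = (d : ℂ) := by rw [← hspec]; exact htr
    refine ⟨S, ?_, ?_, ?_⟩
    · rw [Matrix.isUnit_iff_isUnit_det, isUnit_iff_ne_zero]
      intro h0
      have : B.det = 0 := by
        rw [← hSS, Matrix.det_mul, Matrix.det_conjTranspose, h0, zero_mul]
      exact hB.det_pos.ne' this
    · intro j
      have hd' : (d : ℂ) ≠ 0 := by
        have := j.pos
        exact_mod_cast this.ne'
      have hcC : ((∑ i : Fin d, ‖S i j‖ ^ 2 : ℝ) : ℂ) = 1 := by
        rw [Complex.ofReal_sum]
        have h1 : ∀ i : Fin d, ((‖S i j‖ ^ 2 : ℝ) : ℂ)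
            = (starRingEnd ℂ) (S i j) * S i j := by
          intro i
          rw [← Complex.normSq_eq_conj_mul_self]
          norm_cast
          exact Complex.sq_norm _
        rw [Finset.sum_congr rfl fun i _ => h1 i]
        have h2 : ∑ i : Fin d, (starRingEnd ℂ) (S i j) * S i j
            = (S.conjTranspose * S) j j := by
          rw [Matrix.mul_apply]
          simp [Matrix.conjTranspose_apply]
        rw [h2, hStS, Matrix.mul_apply]
        have h3 : ∀ k : Fin d, (dftM d).conjTranspose j k
            * (Matrix.diagonal (fun i => ((eig i : ℝ) : ℂ)) * dftM d) k j
            = ((eig k : ℝ) : ℂ) * ((d:ℂ))⁻¹ := by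
          intro k
          rw [Matrix.conjTranspose_apply, Matrix.diagonal_mul]
          calc star (dftM d k j) * (((eig k : ℝ):ℂ) * dftM d k j)
              = ((eig k : ℝ):ℂ) * ((starRingEnd ℂ) (dftM d k j) * dftM d k j) := by
                rw [Complex.star_def]; ring
            _ = ((eig k : ℝ):ℂ) * ((d:ℂ))⁻¹ := by rw [dftM_entry_conj_mul]
        rw [Finset.sum_congr rfl fun k _ => h3 k, ← Finset.sum_mul, htrB,
          mul_inv_cancel₀ hd']
      exact_mod_cast hcC
    · rw [hSS, hBdef, Matrix.nonsing_inv_nonsing_inv _ hAdet]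
  · rintro ⟨S, hS, hcol, hAS⟩
    have hSdet : IsUnit S.det := (Matrix.isUnit_iff_isUnit_det S).mp hS
    have hSSdet : IsUnit (S * S.conjTranspose).det := by
      rw [Matrix.det_mul, Matrix.det_conjTranspose]
      exact hSdet.mul hSdet.star
    have hAinv : A⁻¹ = S * S.conjTranspose := by
      rw [hAS, Matrix.nonsing_inv_nonsing_inv _ hSSdet]
    rw [hAinv, Matrix.trace]
    have h1 : ∀ i j : Fin d, S i j * star (S i j) = ((‖S i j‖ ^ 2 : ℝ) : ℂ) := by
      intro i j
      rw [star_def, Complex.mul_conj]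
      norm_cast
      exact (Complex.sq_norm _).symm
    calc ∑ i : Fin d, (S * S.conjTranspose).diag i
        = ∑ i : Fin d, ∑ j : Fin d, ((‖S i j‖ ^ 2 : ℝ) : ℂ) := by
          refine Finset.sum_congr rfl fun i _ => ?_
          rw [Matrix.diag_apply, Matrix.mul_apply]
          exact Finset.sum_congr rfl fun j _ => by
            rw [Matrix.conjTranspose_apply, h1]
      _ = ∑ j : Fin d, ∑ i : Fin d, ((‖S i j‖ ^ 2 : ℝ) : ℂ) := Finset.sum_comm
      _ = ∑ j : Fin d, (1 : ℂ) := by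
          refine Finset.sum_congr rfl fun j _ => ?_
          rw [← Complex.ofReal_sum, hcol j, Complex.ofReal_one]
      _ = (d : ℂ) := by simp
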